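/- Assume I(0) > 0, S(0) ≥ 0 and γ(t) ≥ 0 for all t ≥ 0. If liminf_{t→∞} (β(t)·S(t) − d(t) − γ(t)) > 0, then the infected and the total populations are unbounded: I(t) → +∞ and N(t) → +∞ as t → +∞. -/

import Mathlib

open intervalIntegral Filter

lemma ode_lower (A c f : ℝ → ℝ) (hA : Continuous A)
    (hf : ∀ t : ℝ, 0 ≤ t → HasDerivAt f (A t * f t + c t) t)
    (hc : ∀ t : ℝ, 0 ≤ t → 0 ≤ c t) :
    ∀ t : ℝ, 0 ≤ t → f 0 * Real.exp (∫ s in (0:ℝ)..t, A s) ≤ f t := by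
  set b : ℝ → ℝ := fun u => ∫ s in (0:ℝ)..u, A s with hbdef
  have hb : ∀ t : ℝ, HasDerivAt b (A t) t := fun t =>
    intervalIntegral.integral_hasDerivAt_right (hA.intervalIntegrable _ _)
      (hA.stronglyMeasurableAtFilter _ _) hA.continuousAt
  set g : ℝ → ℝ := fun u => f u * Real.exp (-(b u)) with hgdef
  have hg : ∀ t : ℝ, 0 ≤ t → HasDerivAt g (c t * Real.exp (-(b t))) t := by
    intro t ht
    have h1 : HasDerivAt g ((A t * f t + c t) * Real.exp (-(b t)) + f t * (Real.exp (-(b t)) * -A t)) t :=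
      (hf t ht).mul (((hb t).neg).exp)
    convert h1 using 1
    ring
  have hgc : ContinuousOn g (Set.Ici (0:ℝ)) := fun x hx =>
    ((hg x hx).continuousAt).continuousWithinAt
  have hmono : MonotoneOn g (Set.Ici (0:ℝ)) := by
    apply monotoneOn_of_deriv_nonneg (convex_Ici 0) hgc
    · intro x hx
      rw [interior_Ici] at hx
      exact ((hg x (le_of_lt hx)).differentiableAt).differentiableWithinAt
    · intro x hx
      rw [interior_Ici] at hx
      rw [(hg x (le_of_lt hx)).deriv]
      exact mul_nonneg (hc x (le_of_lt hx)) (Real.exp_pos _).le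
  intro t ht
  have hle : g 0 ≤ g t := hmono Set.self_mem_Ici (Set.mem_Ici.2 ht) ht
  have hb0 : b 0 = 0 := by simp [hbdef]
  have hg0 : g 0 = f 0 := by simp [hgdef, hb0]
  rw [hg0] at hle
  have := mul_le_mul_of_nonneg_right hle (Real.exp_pos (b t)).le
  calc f 0 * Real.exp (b t) ≤ f t * Real.exp (-(b t)) * Real.exp (b t) := this
    _ = f t := by rw [mul_assoc, ← Real.exp_add]; simp

/-- If `I(0) > 0`, `S(0) ≥ 0`, `γ ≥ 0` and `liminf_{t→∞} (β S - d - γ) > 0`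
(encoded: eventually `β S - d - γ ≥ ε` for some `ε > 0`), then the infected and
the total populations are unbounded: `I(t) → +∞` and `N(t) → +∞`. -/
theorem sis_infected_and_total_unbounded
    (r d γ β δ1 δ2 p S I : ℝ → ℝ)
    (hrc : Continuous r) (hdc : Continuous d) (hγc : Continuous γ) (hβc : Continuous β)
    (hδ1c : Continuous δ1) (hδ2c : Continuous δ2) (hpc : Continuous p)
    (hppos : ∀ t : ℝ, 0 ≤ t → 0 < p t)
    (hS : ∀ t : ℝ, 0 ≤ t →
      HasDerivAt S (r t * (1 - (δ1 t * S t + δ2 t * I t) / p t) * S t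
        + (γ t - β t * S t) * I t) t)
    (hI : ∀ t : ℝ, 0 ≤ t → HasDerivAt I ((β t * S t - d t - γ t) * I t) t)
    (hI0 : 0 < I 0) (hS0 : 0 ≤ S 0) (hγpos : ∀ t : ℝ, 0 ≤ t → 0 ≤ γ t)
    (hliminf : ∃ ε : ℝ, 0 < ε ∧ ∃ T : ℝ, 0 ≤ T ∧
      ∀ t : ℝ, T ≤ t → ε ≤ β t * S t - d t - γ t) :
    Filter.Tendsto I Filter.atTop Filter.atTop ∧
    Filter.Tendsto (fun t => S t + I t) Filter.atTop Filter.atTop := by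
  have hScont : ∀ t : ℝ, 0 ≤ t → ContinuousAt S t := fun t ht => (hS t ht).continuousAt
  have hIcont : ∀ t : ℝ, 0 ≤ t → ContinuousAt I t := fun t ht => (hI t ht).continuousAt
  have hm : Continuous (fun u : ℝ => max u 0) := continuous_id.max continuous_const
  have hm0 : ∀ u : ℝ, (0:ℝ) ≤ max u 0 := fun u => le_max_right _ _
  -- truncated coefficient for I
  set aa : ℝ → ℝ := fun t => β (max t 0) * S (max t 0) - d (max t 0) - γ (max t 0) with haadef
  have hSm : ∀ t : ℝ, ContinuousAt (fun u : ℝ => S (max u 0)) t := fun t =>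
    ContinuousAt.comp (g := S) (f := fun u : ℝ => max u 0) (hScont _ (hm0 t)) hm.continuousAt
  have hIm : ∀ t : ℝ, ContinuousAt (fun u : ℝ => I (max u 0)) t := fun t =>
    ContinuousAt.comp (g := I) (f := fun u : ℝ => max u 0) (hIcont _ (hm0 t)) hm.continuousAt
  have hcomp : ∀ (f : ℝ → ℝ), Continuous f → ∀ t : ℝ,
      ContinuousAt (fun u : ℝ => f (max u 0)) t := fun f hf t =>
    ContinuousAt.comp (g := f) (f := fun u : ℝ => max u 0) hf.continuousAt hm.continuousAt
  have haa : Continuous aa := by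
    rw [continuous_iff_continuousAt]
    intro t
    exact (((hcomp β hβc t).mul (hSm t)).sub
      (hcomp d hdc t)).sub (hcomp γ hγc t)
  have haeq : ∀ t : ℝ, 0 ≤ t → aa t = β t * S t - d t - γ t := by
    intro t ht; simp [haadef, max_eq_left ht]
  have hIlow : ∀ t : ℝ, 0 ≤ t → I 0 * Real.exp (∫ s in (0:ℝ)..t, aa s) ≤ I t := by
    apply ode_lower aa (fun _ => 0) I haa
    · intro t ht
      have := hI t ht
      rw [← haeq t ht] at this
      simpa using this
    · intro t _; exact le_refl 0
  have hIpos : ∀ t : ℝ, 0 ≤ t → 0 < I t := fun t ht =>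
    lt_of_lt_of_le (mul_pos hI0 (Real.exp_pos _)) (hIlow t ht)
  -- truncated coefficient for S
  set AA : ℝ → ℝ := fun t => r (max t 0) *
      (1 - (δ1 (max t 0) * S (max t 0) + δ2 (max t 0) * I (max t 0)) / p (max t 0))
      - β (max t 0) * I (max t 0) with hAAdef
  have hAA : Continuous AA := by
    rw [continuous_iff_continuousAt]
    intro t
    have hpne : p (max t 0) ≠ 0 := (hppos _ (hm0 t)).ne'
    exact ((hcomp r hrc t).mul
      (continuousAt_const.sub
        ((((hcomp δ1 hδ1c t).mul (hSm t)).add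
          ((hcomp δ2 hδ2c t).mul (hIm t))).div
          (hcomp p hpc t) hpne))).sub
      ((hcomp β hβc t).mul (hIm t))
  have hSlow : ∀ t : ℝ, 0 ≤ t → S 0 * Real.exp (∫ s in (0:ℝ)..t, AA s) ≤ S t := by
    apply ode_lower AA (fun t => γ t * I t) S hAA
    · intro t ht
      have := hS t ht
      convert this using 1
      simp only [hAAdef, max_eq_left ht]
      ring
    · intro t ht
      exact mul_nonneg (hγpos t ht) (hIpos t ht).le
  have hSnn : ∀ t : ℝ, 0 ≤ t → 0 ≤ S t := fun t ht =>
    le_trans (mul_nonneg hS0 (Real.exp_pos _).le) (hSlow t ht)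
  -- I tends to atTop
  obtain ⟨ε, hε, T, hT, hbd⟩ := hliminf
  set C : ℝ := ∫ s in (0:ℝ)..T, aa s with hCdef
  have hkey : ∀ t : ℝ, T ≤ t → I 0 * Real.exp (C + (t - T) * ε) ≤ I t := by
    intro t htT
    have ht0 : (0:ℝ) ≤ t := hT.trans htT
    have hsplit : (∫ s in (0:ℝ)..t, aa s) = C + ∫ s in T..t, aa s := by
      rw [hCdef, intervalIntegral.integral_add_adjacent_intervals
        (haa.intervalIntegrable _ _) (haa.intervalIntegrable _ _)]
    have hlb : (t - T) * ε ≤ ∫ s in T..t, aa s := by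
      have hmono := intervalIntegral.integral_mono_on htT
        (_root_.intervalIntegrable_const (μ := MeasureTheory.volume) (c := ε)) (haa.intervalIntegrable _ _)
        (fun s hs => by
          rw [haeq s (hT.trans hs.1)]
          exact hbd s hs.1)
      simpa [smul_eq_mul] using hmono
    have hexp : Real.exp (C + (t - T) * ε) ≤ Real.exp (∫ s in (0:ℝ)..t, aa s) := by
      apply Real.exp_le_exp.2
      rw [hsplit]
      linarith
    calc I 0 * Real.exp (C + (t - T) * ε)
        ≤ I 0 * Real.exp (∫ s in (0:ℝ)..t, aa s) :=
          mul_le_mul_of_nonneg_left hexp hI0.le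
      _ ≤ I t := hIlow t ht0
  have hItend : Tendsto I atTop atTop := by
    apply tendsto_atTop_mono' atTop
      (Filter.eventually_atTop.2 ⟨T, fun t ht => hkey t ht⟩)
    have h1 : Tendsto (fun t : ℝ => C + (t - T) * ε) atTop atTop := by
      apply tendsto_atTop_add_const_left
      exact Tendsto.atTop_mul_const hε (tendsto_atTop_add_const_right atTop (-T) tendsto_id)
    exact (Real.tendsto_exp_atTop.comp h1).const_mul_atTop hI0
  refine ⟨hItend, ?_⟩
  apply tendsto_atTop_mono' atTop
    (Filter.eventually_atTop.2 ⟨0, fun t ht => le_add_of_nonneg_left (hSnn t ht)⟩) hItend
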